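/- Let f : ℝ^n → ℝ ∪ {+∞} be a proper function that is uniformly quasiconvex with modulus φ on a closed convex set C ⊆ dom f. If x̄ ∈ C is a stationary point of f on C (in the lower Dini sense), then x̄ is the unique global minimizer of f on C (i.e., argmin_{x∈C} f(x) = {x̄}), and moreover f(x̄) + (1/4)·φ(‖y − x̄‖) ≤ f(y) for all y ∈ C. -/

import Mathlib

noncomputable section

open Set Filter

/-- `φ : [0,∞) → [0,∞]` is a modulus: increasing and vanishing only at `0`. -/
def IsModulus (φ : ℝ → EReal) : Prop :=
  (∀ ⦃s t : ℝ⦄, 0 ≤ s → s ≤ t → φ s ≤ φ t) ∧ φ 0 = 0 ∧ (∀ t : ℝ, 0 < t → 0 < φ t)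

/-- `f` is uniformly quasiconvex on `C` with modulus `φ`. -/
def UnifQuasiconvexOn {E : Type*} [NormedAddCommGroup E] [NormedSpace ℝ E]
    (C : Set E) (φ : ℝ → EReal) (f : E → EReal) : Prop :=
  ∀ ⦃x⦄, x ∈ C → ∀ ⦃y⦄, y ∈ C → ∀ ⦃l : ℝ⦄, l ∈ Set.Icc (0 : ℝ) 1 →
    f (l • x + (1 - l) • y) + ((l * (1 - l) : ℝ) : EReal) * φ ‖x - y‖ ≤ max (f x) (f y)

/-- The lower Dini directional derivative of `f` at `x` in direction `d`,
`liminf_{t↓0} (f(x + t d) − f(x))/t`. -/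
def diniLower {E : Type*} [NormedAddCommGroup E] [NormedSpace ℝ E]
    (f : E → EReal) (x d : E) : EReal :=
  Filter.liminf (fun t : ℝ => ((t⁻¹ : ℝ) : EReal) * (f (x + t • d) - f x))
    (nhdsWithin 0 (Set.Ioi 0))

/-- `x̄ ∈ dom f ∩ C` is a stationary point of `f` on the convex set `C` in the lower Dini
sense: for every feasible direction `d` at `x̄`, `f^{D-}(x̄; d) ≥ 0`. -/
def IsStationaryOn {E : Type*} [NormedAddCommGroup E] [NormedSpace ℝ E]
    (f : E → EReal) (C : Set E) (xb : E) : Prop :=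
  xb ∈ C ∧ f xb ≠ ⊤ ∧
    ∀ d : E, (∃ δ > (0 : ℝ), ∀ l : ℝ, l ∈ Set.Ioo (0 : ℝ) δ → xb + l • d ∈ C) →
      (0 : EReal) ≤ diniLower f xb d

/-- **Stationarity and global optimality.**  If `f` is proper and uniformly
quasiconvex with modulus `φ` on the closed convex set `C ⊆ dom f` and `x̄` is a stationary
point of `f` on `C`, then `x̄` is the unique global minimizer of `f` on `C`, and
`f(x̄) + (1/4)·φ(‖y − x̄‖) ≤ f(y)` for all `y ∈ C`. -/
theorem statement_7 (n : ℕ) (f : EuclideanSpace ℝ (Fin n) → EReal)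
    (hproper : ∃ x, f x ≠ ⊤) (hbot : ∀ x, f x ≠ ⊥)
    (C : Set (EuclideanSpace ℝ (Fin n)))
    (hCclosed : IsClosed C) (hCconv : Convex ℝ C)
    (hdom : ∀ x ∈ C, f x ≠ ⊤)
    (φ : ℝ → EReal) (hφ : IsModulus φ)
    (hquasi : UnifQuasiconvexOn C φ f)
    (xb : EuclideanSpace ℝ (Fin n)) (hstat : IsStationaryOn f C xb) :
    (∀ y ∈ C, f xb ≤ f y) ∧
    (∀ z ∈ C, (∀ y ∈ C, f z ≤ f y) → z = xb) ∧
    (∀ y ∈ C, f xb + (((1 : ℝ) / 4 : ℝ) : EReal) * φ ‖y - xb‖ ≤ f y) := by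
  obtain ⟨hxbC, hxbtop, hstat'⟩ := hstat
  obtain ⟨hmono, hzero, hpos⟩ := hφ
  -- Each value of f on C is a real number
  have hreal : ∀ x ∈ C, ∃ r : ℝ, f x = (r : EReal) := fun x hx =>
    ⟨(f x).toReal, (EReal.coe_toReal (hdom x hx) (hbot x)).symm⟩
  -- φ is finite on differences of points of C
  have hφfin : ∀ y ∈ C, ∀ x ∈ C, φ ‖y - x‖ ≠ ⊤ := by
    intro y hy x hx
    rcases eq_or_ne y x with rfl | hne
    · simp [hzero]
    · intro htop
      have h := hquasi hy hx (l := 1/2) (by constructor <;> norm_num)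
      rw [htop] at h
      have hmul : (((1:ℝ)/2 * (1 - 1/2) : ℝ) : EReal) * (⊤ : EReal) = ⊤ := by
        rw [EReal.coe_mul_top_of_pos]; norm_num
      rw [hmul] at h
      have hm : f ((1/2 : ℝ) • y + (1 - 1/2 : ℝ) • x) ≠ ⊥ := hbot _
      rw [EReal.add_top_of_ne_bot hm] at h
      have : max (f y) (f x) ≠ ⊤ := by
        simp [hdom y hy, hdom x hx]
      exact this (top_le_iff.mp h)
  -- x̄ minimizes f on C
  have hmin : ∀ y ∈ C, f xb ≤ f y := by
    intro y hy
    by_contra hlt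
    push_neg at hlt
    have hne : y ≠ xb := by rintro rfl; exact absurd hlt (lt_irrefl _)
    -- values
    obtain ⟨b, hb⟩ := hreal xb hxbC
    obtain ⟨F, hF⟩ : ∃ F : ℝ, φ ‖y - xb‖ = (F : EReal) :=
      ⟨(φ ‖y - xb‖).toReal, (EReal.coe_toReal (hφfin y hy xb hxbC)
        (by
          have h0 : (0 : EReal) < φ ‖y - xb‖ :=
            hpos _ (norm_pos_iff.mpr (sub_ne_zero.mpr hne))
          exact ne_bot_of_gt h0)).symm⟩
    have hFpos : 0 < F := by
      have h0 : (0 : EReal) < φ ‖y - xb‖ :=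
        hpos _ (norm_pos_iff.mpr (sub_ne_zero.mpr hne))
      rw [hF] at h0
      exact_mod_cast h0
    set d := y - xb with hd
    -- feasibility of direction d
    have hfeas : ∃ δ > (0 : ℝ), ∀ l : ℝ, l ∈ Set.Ioo (0 : ℝ) δ → xb + l • d ∈ C := by
      refine ⟨1, one_pos, fun l hl => ?_⟩
      have heq : xb + l • d = l • y + (1 - l) • xb := by
        rw [hd]; module
      rw [heq]
      exact hCconv hy hxbC hl.1.le (by linarith [hl.2]) (by ring)
    have hstat0 : (0 : EReal) ≤ diniLower f xb d := hstat' d hfeas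
    -- eventual bound on the difference quotients
    have hEv : ∀ᶠ t : ℝ in nhdsWithin 0 (Set.Ioi 0),
        ((t⁻¹ : ℝ) : EReal) * (f (xb + t • d) - f xb) ≤ ((-(F/2) : ℝ) : EReal) := by
      filter_upwards [Ioo_mem_nhdsGT_of_mem (by constructor <;> norm_num :
          (0:ℝ) ∈ Set.Ico (0:ℝ) (1/2))] with t ht
      have htpos : 0 < t := ht.1
      have htlt : t < 1/2 := ht.2
      have hptC : xb + t • d ∈ C := by
        have heq : xb + t • d = t • y + (1 - t) • xb := by rw [hd]; module
        rw [heq]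
        exact hCconv hy hxbC htpos.le (by linarith) (by ring)
      obtain ⟨a, ha⟩ := hreal _ hptC
      have hq := hquasi hy hxbC (l := t) ⟨htpos.le, by linarith⟩
      have heq : t • y + (1 - t) • xb = xb + t • d := by rw [hd]; module
      have hmax : max (f y) (f xb) = f xb := max_eq_right hlt.le
      rw [heq, ha, hF, hmax, hb] at hq
      have hq' : a + t * (1 - t) * F ≤ b := by exact_mod_cast hq
      rw [ha, hb]
      have hcast : ((a : EReal) - (b : EReal)) = ((a - b : ℝ) : EReal) := by norm_cast
      rw [hcast, ← EReal.coe_mul, EReal.coe_le_coe_iff]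
      have h1 : t⁻¹ * (a - b) ≤ t⁻¹ * (-(t * (1 - t) * F)) := by
        apply mul_le_mul_of_nonneg_left (by linarith) (by positivity)
      have h2 : t⁻¹ * (-(t * (1 - t) * F)) = -((1 - t) * F) := by
        field_simp
      rw [h2] at h1
      nlinarith
    have hlim : diniLower f xb d ≤ ((-(F/2) : ℝ) : EReal) := by
      have := Filter.liminf_le_liminf hEv
      rwa [Filter.liminf_const] at this
    have : (0 : EReal) ≤ ((-(F/2) : ℝ) : EReal) := le_trans hstat0 hlim
    have : (0:ℝ) ≤ -(F/2) := by exact_mod_cast this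
    linarith
  -- the quantitative inequality
  have hineq : ∀ y ∈ C, f xb + (((1 : ℝ) / 4 : ℝ) : EReal) * φ ‖y - xb‖ ≤ f y := by
    intro y hy
    rcases eq_or_ne y xb with rfl | hne
    · simp [hzero]
    · have hq := hquasi hy hxbC (l := 1/2) (by constructor <;> norm_num)
      have hmax : max (f y) (f xb) = f y := max_eq_left (hmin y hy)
      rw [hmax] at hq
      have hc : (((1:ℝ)/2 * (1 - 1/2) : ℝ) : EReal) = (((1 : ℝ) / 4 : ℝ) : EReal) := by
        norm_num
      rw [hc] at hq
      have hmidC : (1/2 : ℝ) • y + (1 - 1/2 : ℝ) • xb ∈ C :=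
        hCconv hy hxbC (by norm_num) (by norm_num) (by norm_num)
      calc f xb + (((1 : ℝ) / 4 : ℝ) : EReal) * φ ‖y - xb‖
          ≤ f ((1/2 : ℝ) • y + (1 - 1/2 : ℝ) • xb) + (((1 : ℝ) / 4 : ℝ) : EReal) * φ ‖y - xb‖ :=
            add_le_add_left (hmin _ hmidC) _
        _ ≤ f y := hq
  refine ⟨hmin, ?_, hineq⟩
  intro z hz hzmin
  by_contra hne
  have h1 := hineq z hz
  have h2 : f z ≤ f xb := hzmin xb hxbC
  obtain ⟨b, hb⟩ := hreal xb hxbC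
  obtain ⟨F, hF⟩ : ∃ F : ℝ, φ ‖z - xb‖ = (F : EReal) :=
    ⟨(φ ‖z - xb‖).toReal, (EReal.coe_toReal (hφfin z hz xb hxbC)
      (ne_bot_of_gt (hpos _ (norm_pos_iff.mpr (sub_ne_zero.mpr hne))))).symm⟩
  have hFpos : 0 < F := by
    have h0 : (0 : EReal) < φ ‖z - xb‖ :=
      hpos _ (norm_pos_iff.mpr (sub_ne_zero.mpr hne))
    rw [hF] at h0
    exact_mod_cast h0
  have h3 : f xb + (((1 : ℝ) / 4 : ℝ) : EReal) * φ ‖z - xb‖ ≤ f xb :=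
    le_trans h1 h2
  rw [hb, hF, ← EReal.coe_mul, ← EReal.coe_add, EReal.coe_le_coe_iff] at h3
  nlinarith
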